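/- Let n ≥ 4 be even and let M = ⟨σ⟩ × ⟨τ⟩ be a special metacyclic subgroup of S_n with τ = (i j) a transposition, σ(i) = i and σ(j) = j. If every orbit of σ other than the fixed points {i} and {j} has even size, then M is contained in a conjugate of the wreath product S_2 ≀ S_{n/2}; equivalently, there is a partition of {1,…,n} into n/2 blocks of size 2 whose blocks are permuted by both σ and τ. -/

import Mathlib

/-- The stabilizer `S_b ≀ S_{n/b}` in `Sₙ` of the partition of `{0,…,n-1}` into consecutive
blocks of size `b`. -/
def blockStab (n b : ℕ) : Subgroup (Equiv.Perm (Fin n)) where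
  carrier := {ψ | ∀ a c : Fin n, (ψ a : ℕ) / b = (ψ c : ℕ) / b ↔ (a : ℕ) / b = (c : ℕ) / b}
  one_mem' := by intro a c; simp
  mul_mem' := by
    intro ψ φ hψ hφ a c
    simp only [Equiv.Perm.mul_apply]
    exact (hψ _ _).trans (hφ _ _)
  inv_mem' := by
    intro ψ hψ a c
    simpa using (hψ (ψ⁻¹ a) (ψ⁻¹ c)).symm

lemma pair_perm_exists {n : ℕ} (p : Fin n → Fin n) (hp : Function.Involutive p)
    (hfix : ∀ a, p a ≠ a) :
    ∃ k : Equiv.Perm (Fin n), ∀ a c : Fin n,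
      ((k a : ℕ) / 2 = (k c : ℕ) / 2 ↔ (c = a ∨ c = p a)) := by
  classical
  set S : Finset (Fin n) := Finset.univ.filter (fun a => a < p a) with hS
  have hmemS : ∀ a, a ∈ S ↔ a < p a := by intro a; simp [hS]
  have htri : ∀ a : Fin n, ¬ a < p a → p a < a := by
    intro a h
    rcases lt_or_gt_of_ne (hfix a) with h' | h'
    · exact h'
    · exact absurd h' h
  have hcompl : Sᶜ = Finset.univ.filter (fun a => ¬ a < p a) := by
    ext a; simp [hS]
  have hcard : S.card + S.card = n := by
    have h1 : Sᶜ.card = S.card := by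
      rw [hcompl]
      apply Finset.card_bij (fun a _ => p a)
      · intro a ha
        simp only [Finset.mem_filter, Finset.mem_univ, true_and] at ha
        rw [hmemS, hp a]
        exact htri a ha
      · intro a _ b _ h
        exact hp.injective h
      · intro b hb
        rw [hmemS] at hb
        refine ⟨p b, ?_, hp b⟩
        simp only [Finset.mem_filter, Finset.mem_univ, true_and, hp b, not_lt]
        exact le_of_lt hb
    have h2 := Finset.card_add_card_compl S
    rw [h1] at h2
    simpa [Fintype.card_fin] using h2
  let e : {x // x ∈ S} ≃ Fin S.card := S.equivFin
  classical
  have hrepS : ∀ a : Fin n, (if a < p a then a else p a) ∈ S := by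
    intro a
    rw [hmemS]
    by_cases h : a < p a
    · rwa [if_pos h]
    · rw [if_neg h, hp a]
      exact htri a h
  set rep : Fin n → {x // x ∈ S} := fun a => ⟨if a < p a then a else p a, hrepS a⟩ with hrepdef
  have hrep_val : ∀ a, (rep a : Fin n) = if a < p a then a else p a := fun a => rfl
  have hrep_pa : ∀ a, rep (p a) = rep a := by
    intro a
    apply Subtype.ext
    rw [hrep_val, hrep_val, hp a]
    by_cases h : a < p a
    · rw [if_pos h, if_neg (not_lt.mpr (le_of_lt h))]
    · rw [if_neg h, if_pos (htri a h)]
  have hrep_eq : ∀ a c : Fin n, rep a = rep c → (c = a ∨ c = p a) := by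
    intro a c h
    have h' := Subtype.ext_iff.mp h
    rw [hrep_val, hrep_val] at h'
    by_cases ha : a < p a <;> by_cases hc : c < p c
    · rw [if_pos ha, if_pos hc] at h'; exact Or.inl h'.symm
    · rw [if_pos ha, if_neg hc] at h'
      exact Or.inr (by rw [h', hp c])
    · rw [if_neg ha, if_pos hc] at h'; exact Or.inr h'.symm
    · rw [if_neg ha, if_neg hc] at h'
      exact Or.inl (hp.injective h').symm
  let F : Fin n → Fin n := fun a =>
    ⟨2 * (e (rep a) : ℕ) + (if a < p a then 0 else 1), by
      have := (e (rep a)).isLt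
      split <;> omega⟩
  have hFval : ∀ a : Fin n, (F a : ℕ) = 2 * (e (rep a) : ℕ) + (if a < p a then 0 else 1) :=
    fun a => rfl
  have hF2 : ∀ a : Fin n, (F a : ℕ) / 2 = (e (rep a) : ℕ) := by
    intro a
    rw [hFval]
    by_cases h : a < p a
    · rw [if_pos h]; omega
    · rw [if_neg h]; omega
  have hFinj : Function.Injective F := by
    intro a c h
    have h' : (F a : ℕ) = (F c : ℕ) := by rw [h]
    rw [hFval, hFval] at h'
    by_cases ha : a < p a <;> by_cases hc : c < p c
    · rw [if_pos ha, if_pos hc] at h'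
      have : (e (rep a) : ℕ) = (e (rep c) : ℕ) := by omega
      have := hrep_eq a c (e.injective (Fin.val_injective this))
      rcases this with rfl | rfl
      · rfl
      · have hc' : p a < a := by rwa [hp a] at hc
        exact absurd hc' (not_lt.mpr (le_of_lt ha))
    · rw [if_pos ha, if_neg hc] at h'; omega
    · rw [if_neg ha, if_pos hc] at h'; omega
    · rw [if_neg ha, if_neg hc] at h'
      have : (e (rep a) : ℕ) = (e (rep c) : ℕ) := by omega
      have := hrep_eq a c (e.injective (Fin.val_injective this))
      rcases this with rfl | rfl
      · rfl
      · have hc' : ¬ p a < a := by rwa [hp a] at hc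
        exact absurd (htri a ha) hc'
  let k : Equiv.Perm (Fin n) := Equiv.ofBijective F (Finite.injective_iff_bijective.mp hFinj)
  have hk : ∀ a, k a = F a := fun a => rfl
  refine ⟨k, fun a c => ?_⟩
  rw [hk, hk, hF2, hF2]
  constructor
  · intro h
    exact hrep_eq a c (e.injective (Fin.val_injective h))
  · rintro (rfl | rfl)
    · rfl
    · rw [hrep_pa]

theorem specialMetacyclic_le_conj_blockStab_two (n : ℕ) (hn : 4 ≤ n) (hne : Even n)
    (M : Subgroup (Equiv.Perm (Fin n))) (σ τ : Equiv.Perm (Fin n)) (i j : Fin n)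
    (hij : i ≠ j) (hτ : τ = Equiv.swap i j) (hσi : σ i = i) (hσj : σ j = j)
    (heven : Even (orderOf σ)) (hcomm : Commute σ τ)
    (hint : Subgroup.zpowers σ ⊓ Subgroup.zpowers τ = ⊥)
    (hM : M = Subgroup.closure {σ, τ})
    (horb : ∀ a : Fin n, a ≠ i → a ≠ j →
      Even (Nat.card {x : Fin n | ∃ k : ℤ, (σ ^ k) a = x})) :
    ∃ k : Equiv.Perm (Fin n), ∀ x ∈ M, k * x * k⁻¹ ∈ blockStab n 2 := by
  classical
  -- every point is periodic
  have hper : ∀ a : Fin n, a ∈ Function.periodicPts σ := by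
    intro a
    refine ⟨orderOf σ, orderOf_pos σ, ?_⟩
    show σ^[orderOf σ] a = a
    rw [Equiv.Perm.iterate_eq_pow, pow_orderOf_eq_one]
    rfl
  set m : Fin n → ℕ := fun a => Function.minimalPeriod σ a with hm
  have hmpos : ∀ a, 0 < m a := fun a =>
    Function.minimalPeriod_pos_of_mem_periodicPts (hper a)
  -- orbit cardinality = minimal period
  have hm_even : ∀ a : Fin n, a ≠ i → a ≠ j → Even (m a) := by
    intro a hai haj
    have hset : {x : Fin n | ∃ k : ℤ, (σ ^ k) a = x}
        = MulAction.orbit (Subgroup.zpowers σ) a := by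
      ext x
      constructor
      · rintro ⟨k, rfl⟩
        exact ⟨⟨σ ^ k, zpow_mem (Subgroup.mem_zpowers σ) k⟩, rfl⟩
      · rintro ⟨⟨g, hg⟩, rfl⟩
        obtain ⟨k, rfl⟩ := Subgroup.mem_zpowers_iff.mp hg
        exact ⟨k, rfl⟩
    have hcardeq : Nat.card {x : Fin n | ∃ k : ℤ, (σ ^ k) a = x} = m a := by
      rw [hset, Nat.card_eq_fintype_card, ← MulAction.minimalPeriod_eq_card]
      rfl
    rw [← hcardeq]
    exact horb a hai haj
  -- σ powers fix i and j, and preserve the complement of {i, j}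
  have hpow_i : ∀ t : ℕ, (σ ^ t) i = i := by
    intro t
    rw [← Equiv.Perm.iterate_eq_pow]
    exact Function.iterate_fixed hσi t
  have hpow_j : ∀ t : ℕ, (σ ^ t) j = j := by
    intro t
    rw [← Equiv.Perm.iterate_eq_pow]
    exact Function.iterate_fixed hσj t
  have hpow_ne : ∀ (a : Fin n), a ≠ i → a ≠ j → ∀ t : ℕ,
      (σ ^ t) a ≠ i ∧ (σ ^ t) a ≠ j := by
    intro a hai haj t
    constructor
    · intro h
      exact hai ((σ ^ t).injective (h.trans (hpow_i t).symm))
    · intro h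
      exact haj ((σ ^ t).injective (h.trans (hpow_j t).symm))
  -- the pairing involution
  set p : Fin n → Fin n :=
    fun a => if a = i then j else if a = j then i else (σ ^ (m a / 2)) a with hpdef
  have hpi : p i = j := by simp [hpdef]
  have hpj : p j = i := by simp [hpdef, hij.symm]
  have hpelse : ∀ a, a ≠ i → a ≠ j → p a = (σ ^ (m a / 2)) a := by
    intro a hai haj
    simp [hpdef, hai, haj]
  have hm_iter : ∀ (a : Fin n) (t : ℕ), m ((σ ^ t) a) = m a := by
    intro a t
    rw [hm]
    show Function.minimalPeriod σ ((σ ^ t) a) = Function.minimalPeriod σ a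
    rw [← Equiv.Perm.iterate_eq_pow]
    exact Function.minimalPeriod_apply_iterate (hper a) t
  have hm_per : ∀ a : Fin n, (σ ^ (m a)) a = a := by
    intro a
    have := Function.isPeriodicPt_minimalPeriod σ a
    rw [Function.IsPeriodicPt, Function.IsFixedPt, Equiv.Perm.iterate_eq_pow] at this
    exact this
  have hp_else_ne : ∀ a, a ≠ i → a ≠ j → p a ≠ i ∧ p a ≠ j := by
    intro a hai haj
    rw [hpelse a hai haj]
    exact hpow_ne a hai haj _
  have hp_inv : Function.Involutive p := by
    intro a
    by_cases hai : a = i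
    · rw [hai, hpi, hpj]
    by_cases haj : a = j
    · rw [haj, hpj, hpi]
    obtain ⟨h1, h2⟩ := hp_else_ne a hai haj
    rw [hpelse a hai haj] at h1 h2 ⊢
    rw [hpelse _ h1 h2, hm_iter, ← Equiv.Perm.mul_apply, ← pow_add]
    obtain ⟨r, hr⟩ := hm_even a hai haj
    have : m a / 2 + m a / 2 = m a := by omega
    rw [this]
    exact hm_per a
  have hp_fix : ∀ a, p a ≠ a := by
    intro a
    by_cases hai : a = i
    · rw [hai, hpi]; exact fun h => hij h.symm
    by_cases haj : a = j
    · rw [haj, hpj]; exact hij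
    rw [hpelse a hai haj]
    intro h
    have hdvd : m a ∣ m a / 2 := by
      apply Function.IsPeriodicPt.minimalPeriod_dvd
      rw [Function.IsPeriodicPt, Function.IsFixedPt, Equiv.Perm.iterate_eq_pow]
      exact h
    obtain ⟨r, hr⟩ := hm_even a hai haj
    have h1 := hmpos a
    have h2 := Nat.le_of_dvd (by omega) hdvd
    omega
  have hpσ : ∀ a, p (σ a) = σ (p a) := by
    intro a
    by_cases hai : a = i
    · rw [hai, hσi, hpi, hσj]
    by_cases haj : a = j
    · rw [haj, hσj, hpj, hσi]
    have hσa_i : σ a ≠ i := fun h => hai (σ.injective (h.trans hσi.symm))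
    have hσa_j : σ a ≠ j := fun h => haj (σ.injective (h.trans hσj.symm))
    rw [hpelse _ hσa_i hσa_j, hpelse a hai haj]
    have hmσ : m (σ a) = m a := by
      have := hm_iter a 1
      rwa [pow_one] at this
    rw [hmσ, ← Equiv.Perm.mul_apply, ← Equiv.Perm.mul_apply, ← pow_succ, ← pow_succ']
  have hpτ : ∀ a, p (τ a) = τ (p a) := by
    intro a
    rw [hτ]
    by_cases hai : a = i
    · rw [hai, Equiv.swap_apply_left, hpj, hpi, Equiv.swap_apply_right]
    by_cases haj : a = j
    · rw [haj, Equiv.swap_apply_right, hpi, hpj, Equiv.swap_apply_left]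
    obtain ⟨h1, h2⟩ := hp_else_ne a hai haj
    rw [Equiv.swap_apply_of_ne_of_ne hai haj, Equiv.swap_apply_of_ne_of_ne h1 h2]
  -- p as a permutation; M centralizes it
  set P : Equiv.Perm (Fin n) := hp_inv.toPerm p with hPdef
  have hPapp : ∀ a, P a = p a := fun a => rfl
  have hcent : M ≤ Subgroup.centralizer {P} := by
    rw [hM, Subgroup.closure_le]
    intro x hx
    rw [SetLike.mem_coe, Subgroup.mem_centralizer_iff]
    intro g hg
    rw [Set.mem_singleton_iff] at hg
    subst hg
    rcases hx with rfl | hx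
    · ext a
      simp only [Equiv.Perm.mul_apply, hPapp]
      exact congrArg Fin.val (hpσ a)
    · rw [Set.mem_singleton_iff] at hx
      subst hx
      ext a
      simp only [Equiv.Perm.mul_apply, hPapp]
      exact congrArg Fin.val (hpτ a)
  obtain ⟨k, hk⟩ := pair_perm_exists p hp_inv hp_fix
  refine ⟨k, fun x hx => ?_⟩
  have hxP := hcent hx
  rw [Subgroup.mem_centralizer_iff] at hxP
  have hxp : ∀ a, x (p a) = p (x a) := by
    intro a
    have h1 := hxP P (Set.mem_singleton P)
    have h2 := congrArg (fun f : Equiv.Perm (Fin n) => f a) h1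
    simp only [Equiv.Perm.mul_apply, hPapp] at h2
    exact h2.symm
  show ∀ a c : Fin n, ((k * x * k⁻¹) a : ℕ) / 2 = ((k * x * k⁻¹) c : ℕ) / 2
      ↔ (a : ℕ) / 2 = (c : ℕ) / 2
  intro a c
  simp only [Equiv.Perm.mul_apply]
  calc ((k (x (k⁻¹ a)) : ℕ) / 2 = (k (x (k⁻¹ c)) : ℕ) / 2)
      ↔ (x (k⁻¹ c) = x (k⁻¹ a) ∨ x (k⁻¹ c) = p (x (k⁻¹ a))) := hk _ _
    _ ↔ (k⁻¹ c = k⁻¹ a ∨ k⁻¹ c = p (k⁻¹ a)) := by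
        rw [← hxp, x.injective.eq_iff, x.injective.eq_iff]
    _ ↔ ((k (k⁻¹ a) : ℕ) / 2 = (k (k⁻¹ c) : ℕ) / 2) := (hk _ _).symm
    _ ↔ ((a : ℕ) / 2 = (c : ℕ) / 2) := by
        rw [← Equiv.Perm.mul_apply, ← Equiv.Perm.mul_apply, mul_inv_cancel, Equiv.Perm.one_apply, Equiv.Perm.one_apply]
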